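/- Given positive monotonically increasing sequences tending to infinity: for every (k_p) ∈ 𝔕 there exists (k'_p) ∈ 𝔕 such that k'_p ≤ k_p for all p and ∏_{j=1}^{p+q} k'_j ≤ 2^{p+q} (∏_{j=1}^{p} k'_j)(∏_{j=1}^{q} k'_j) for all p, q ∈ ℤ_+. -/

import Mathlib

open Finset

noncomputable def cSeq (k : ℕ → ℝ) : ℕ → ℝ
  | 0 => k 1
  | n + 1 => min (cSeq k n) (k (n + 1) / ((n + 1 : ℕ) : ℝ))

lemma cSeq_succ (k : ℕ → ℝ) (n : ℕ) :
    cSeq k (n + 1) = min (cSeq k n) (k (n + 1) / ((n + 1 : ℕ) : ℝ)) := rfl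

lemma cSeq_pos (k : ℕ → ℝ) (hpos : ∀ p, 0 < k p) : ∀ n, 0 < cSeq k n
  | 0 => hpos 1
  | n + 1 => lt_min (cSeq_pos k hpos n)
      (div_pos (hpos _) (by exact_mod_cast Nat.succ_pos n))

lemma cSeq_antitone (k : ℕ → ℝ) : Antitone (cSeq k) :=
  antitone_nat_of_succ_le fun n => min_le_left _ _

lemma cSeq_le_self (k : ℕ → ℝ) : ∀ m, 1 ≤ m → cSeq k m ≤ k m / ((m : ℕ) : ℝ)
  | m + 1, _ => min_le_right _ _

lemma cSeq_le (k : ℕ → ℝ) {m n : ℕ} (hm : 1 ≤ m) (hmn : m ≤ n) :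
    cSeq k n ≤ k m / ((m : ℕ) : ℝ) :=
  (cSeq_antitone k hmn).trans (cSeq_le_self k m hm)

lemma cSeq_argmin (k : ℕ → ℝ) :
    ∀ n, ∃ m, 1 ≤ m ∧ m ≤ max n 1 ∧ cSeq k n = k m / ((m : ℕ) : ℝ)
  | 0 => ⟨1, le_refl 1, le_max_right 0 1, by simp [cSeq]⟩
  | n + 1 => by
    rcases le_total (cSeq k n) (k (n + 1) / ((n + 1 : ℕ) : ℝ)) with h | h
    · obtain ⟨m, h1, h2, h3⟩ := cSeq_argmin k n
      exact ⟨m, h1, by omega, by rw [cSeq_succ, min_eq_left h, h3]⟩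
    · exact ⟨n + 1, by omega, by omega, by rw [cSeq_succ, min_eq_right h]⟩

noncomputable def kAux (k : ℕ → ℝ) (n : ℕ) : ℝ :=
  if n = 0 then min (k 0) (k 1) else n * cSeq k n

lemma kAux_eq (k : ℕ → ℝ) {n : ℕ} (hn : 1 ≤ n) :
    kAux k n = n * cSeq k n := by
  rw [kAux, if_neg (by omega)]

lemma kAux_pos (k : ℕ → ℝ) (hpos : ∀ p, 0 < k p) (n : ℕ) : 0 < kAux k n := by
  rcases Nat.eq_zero_or_pos n with rfl | hn
  · rw [kAux, if_pos rfl]; exact lt_min (hpos 0) (hpos 1)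
  · rw [kAux_eq k hn]
    exact mul_pos (by exact_mod_cast hn) (cSeq_pos k hpos n)

lemma kAux_le (k : ℕ → ℝ) (hpos : ∀ p, 0 < k p) (n : ℕ) : kAux k n ≤ k n := by
  rcases Nat.eq_zero_or_pos n with rfl | hn
  · rw [kAux, if_pos rfl]; exact min_le_left _ _
  · rw [kAux_eq k hn]
    have hn' : (0 : ℝ) < ((n : ℕ) : ℝ) := by exact_mod_cast hn
    calc (n : ℝ) * cSeq k n ≤ n * (k n / ((n : ℕ) : ℝ)) :=
          mul_le_mul_of_nonneg_left (cSeq_le k hn le_rfl) hn'.le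
      _ = k n := by field_simp

lemma cSeq_one (k : ℕ → ℝ) : cSeq k 1 = k 1 := by
  rw [cSeq_succ, show cSeq k 0 = k 1 from rfl]
  norm_num

lemma kAux_mono (k : ℕ → ℝ) (hpos : ∀ p, 0 < k p) (hmono : Monotone k) :
    Monotone (kAux k) := by
  apply monotone_nat_of_le_succ
  intro n
  rcases Nat.eq_zero_or_pos n with rfl | hn
  · rw [kAux, if_pos rfl, kAux_eq k le_rfl, cSeq_one]
    push_cast
    rw [one_mul]
    exact min_le_right _ _
  · rw [kAux_eq k hn, kAux_eq k (by omega : 1 ≤ n + 1)]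
    rcases le_total (cSeq k n) (k (n + 1) / ((n + 1 : ℕ) : ℝ)) with h | h
    · rw [cSeq_succ, min_eq_left h]
      apply mul_le_mul_of_nonneg_right _ (cSeq_pos k hpos n).le
      exact_mod_cast Nat.le_succ n
    · rw [cSeq_succ, min_eq_right h]
      have hpos1 : (0 : ℝ) < ((n + 1 : ℕ) : ℝ) := by exact_mod_cast Nat.succ_pos n
      have heq : ((n + 1 : ℕ) : ℝ) * (k (n + 1) / ((n + 1 : ℕ) : ℝ)) = k (n + 1) := by
        field_simp
      rw [heq]
      calc (n : ℝ) * cSeq k n ≤ k n := by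
            have := kAux_le k hpos n; rwa [kAux_eq k hn] at this
        _ ≤ k (n + 1) := hmono (Nat.le_succ n)

lemma kAux_tendsto (k : ℕ → ℝ) (hpos : ∀ p, 0 < k p)
    (htends : Filter.Tendsto k Filter.atTop Filter.atTop) :
    Filter.Tendsto (kAux k) Filter.atTop Filter.atTop := by
  rw [Filter.tendsto_atTop]
  intro T
  obtain ⟨M₀, hM₀⟩ := Filter.eventually_atTop.1 ((Filter.tendsto_atTop.1 htends) T)
  set M := max M₀ 1 with hM
  have hM1 : 1 ≤ M := le_max_right _ _
  have hCpos : 0 < cSeq k M := cSeq_pos k hpos M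
  rw [Filter.eventually_atTop]
  refine ⟨max M (Nat.ceil (T / cSeq k M)), fun n hn => ?_⟩
  have hnM : M ≤ n := le_trans (le_max_left _ _) hn
  have hn1 : 1 ≤ n := le_trans hM1 hnM
  rw [kAux_eq k hn1]
  obtain ⟨m, hm1, hm2, hm3⟩ := cSeq_argmin k n
  rw [max_eq_left hn1] at hm2
  rcases le_total M m with hMm | hmM
  · have hkm : T ≤ k m := hM₀ m (le_trans (le_max_left _ _) hMm)
    have hm0 : (0 : ℝ) < ((m : ℕ) : ℝ) := by exact_mod_cast hm1
    calc T ≤ k m := hkm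
      _ = m * (k m / ((m : ℕ) : ℝ)) := by field_simp
      _ ≤ n * (k m / ((m : ℕ) : ℝ)) := by
          apply mul_le_mul_of_nonneg_right _ (div_nonneg (hpos m).le hm0.le)
          exact_mod_cast hm2
      _ = n * cSeq k n := by rw [hm3]
  · have h2 : cSeq k M ≤ cSeq k n := by
      rw [hm3]; exact cSeq_le k hm1 hmM
    have hceil : (Nat.ceil (T / cSeq k M) : ℝ) ≤ (n : ℝ) := by
      exact_mod_cast le_trans (le_max_right M _) hn
    have hTn : T / cSeq k M ≤ (n : ℝ) := le_trans (Nat.le_ceil _) hceil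
    have hn0 : (0 : ℝ) ≤ (n : ℝ) := by positivity
    calc T = (T / cSeq k M) * cSeq k M := by field_simp
      _ ≤ (n : ℝ) * cSeq k M := mul_le_mul_of_nonneg_right hTn hCpos.le
      _ ≤ (n : ℝ) * cSeq k n := mul_le_mul_of_nonneg_left h2 hn0

lemma prod_Icc_add_mul_factorial (q : ℕ) :
    ∀ p : ℕ, (∏ j ∈ Icc 1 p, (q + j)) * q.factorial = (p + q).factorial
  | 0 => by simp
  | p + 1 => by
    rw [Finset.prod_Icc_succ_top (by omega : 1 ≤ p + 1), mul_right_comm,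
      prod_Icc_add_mul_factorial q p,
      show p + 1 + q = (p + q) + 1 by omega, Nat.factorial_succ]
    ring

lemma prod_Icc_add_eq_choose (q p : ℕ) :
    (∏ j ∈ Icc 1 p, (q + j)) = (p + q).choose p * p.factorial := by
  have h2 := Nat.choose_mul_factorial_mul_factorial (Nat.le_add_right p q)
  rw [show p + q - p = q by omega] at h2
  refine Nat.eq_of_mul_eq_mul_right q.factorial_pos ?_
  rw [prod_Icc_add_mul_factorial q p, ← h2]

lemma choose_le_two_pow' (p q : ℕ) : (p + q).choose p ≤ 2 ^ (p + q) := by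
  calc (p + q).choose p ≤ ∑ i ∈ range (p + q + 1), (p + q).choose i :=
        Finset.single_le_sum (fun i _ => Nat.zero_le _) (by simp only [Finset.mem_range]; omega)
    _ = 2 ^ (p + q) := Nat.sum_range_choose (p + q)

lemma prod_Icc_id_factorial (p : ℕ) : (∏ j ∈ Icc 1 p, j) = p.factorial := by
  rw [← Finset.Ico_add_one_right_eq_Icc]
  exact Finset.prod_Ico_id_eq_factorial p

lemma ratio_prod_le (p q : ℕ) :
    (∏ j ∈ Icc 1 p, ((q + j : ℕ) : ℝ) / ((j : ℕ) : ℝ)) ≤ 2 ^ (p + q) := by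
  have hden : (∏ j ∈ Icc 1 p, ((j : ℕ) : ℝ)) = (p.factorial : ℝ) := by
    rw [← Nat.cast_prod, prod_Icc_id_factorial]
  have hnum : (∏ j ∈ Icc 1 p, ((q + j : ℕ) : ℝ))
      = (((p + q).choose p * p.factorial : ℕ) : ℝ) := by
    rw [← Nat.cast_prod, prod_Icc_add_eq_choose]
  rw [Finset.prod_div_distrib, hnum, hden]
  have hfac : (0 : ℝ) < (p.factorial : ℝ) := by exact_mod_cast p.factorial_pos
  rw [Nat.cast_mul, mul_div_assoc, div_self (ne_of_gt hfac), mul_one]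
  calc ((p + q).choose p : ℝ) ≤ (((2 : ℕ) ^ (p + q) : ℕ) : ℝ) := by
        exact_mod_cast choose_le_two_pow' p q
    _ = 2 ^ (p + q) := by push_cast; ring

theorem stmt4 (k : ℕ → ℝ) (hpos : ∀ p, 0 < k p) (hmono : Monotone k)
    (htends : Filter.Tendsto k Filter.atTop Filter.atTop) :
    ∃ k' : ℕ → ℝ, (∀ p, 0 < k' p) ∧ Monotone k' ∧
      Filter.Tendsto k' Filter.atTop Filter.atTop ∧ (∀ p, k' p ≤ k p) ∧
      ∀ p q : ℕ, 1 ≤ p → 1 ≤ q →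
        (∏ j ∈ Finset.Icc 1 (p + q), k' j) ≤
          (2 : ℝ) ^ (p + q) *
            ((∏ j ∈ Finset.Icc 1 p, k' j) * (∏ j ∈ Finset.Icc 1 q, k' j)) := by
  refine ⟨kAux k, kAux_pos k hpos, kAux_mono k hpos hmono, kAux_tendsto k hpos htends,
    kAux_le k hpos, ?_⟩
  intro p q hp hq
  have hIcc : ∀ n : ℕ, Icc 1 n = Ioc 0 n := fun n => Finset.Icc_add_one_left_eq_Ioc 0 n
  have hsplit : (∏ j ∈ Icc 1 (p + q), kAux k j)
      = (∏ j ∈ Icc 1 q, kAux k j) * ∏ j ∈ Ioc q (p + q), kAux k j := by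
    rw [hIcc (p + q), hIcc q,
      Finset.prod_Ioc_consecutive (kAux k) (Nat.zero_le q) (Nat.le_add_left q p)]
  have hmap : (∏ j ∈ Ioc q (p + q), kAux k j) = ∏ j ∈ Icc 1 p, kAux k (q + j) := by
    rw [hIcc p, show Ioc q (p + q) = Ioc (q + 0) (q + p) by rw [add_zero, add_comm q p],
      ← Finset.map_add_left_Ioc, Finset.prod_map]
    rfl
  have hpt : ∀ j ∈ Icc 1 p, kAux k (q + j) ≤ ((q + j : ℕ) : ℝ) / ((j : ℕ) : ℝ) * kAux k j := by
    intro j hj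
    have hj1 : 1 ≤ j := (Finset.mem_Icc.1 hj).1
    have hqj1 : 1 ≤ q + j := by omega
    rw [kAux_eq k hqj1, kAux_eq k hj1]
    have hj0 : (0 : ℝ) < ((j : ℕ) : ℝ) := by exact_mod_cast hj1
    have heq : ((q + j : ℕ) : ℝ) / ((j : ℕ) : ℝ) * (((j : ℕ) : ℝ) * cSeq k j)
        = ((q + j : ℕ) : ℝ) * cSeq k j := by
      field_simp
    rw [heq]
    have hqj0 : (0 : ℝ) ≤ ((q + j : ℕ) : ℝ) := by positivity
    exact mul_le_mul_of_nonneg_left (cSeq_antitone k (Nat.le_add_left j q)) hqj0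
  have hprod1 : (∏ j ∈ Icc 1 p, kAux k (q + j))
      ≤ ∏ j ∈ Icc 1 p, (((q + j : ℕ) : ℝ) / ((j : ℕ) : ℝ) * kAux k j) :=
    Finset.prod_le_prod (fun j _ => (kAux_pos k hpos _).le) hpt
  have hprod2 : (∏ j ∈ Icc 1 p, (((q + j : ℕ) : ℝ) / ((j : ℕ) : ℝ) * kAux k j))
      = (∏ j ∈ Icc 1 p, ((q + j : ℕ) : ℝ) / ((j : ℕ) : ℝ)) * ∏ j ∈ Icc 1 p, kAux k j :=
    Finset.prod_mul_distrib
  have hratio := ratio_prod_le p q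
  have hppos : (0 : ℝ) ≤ ∏ j ∈ Icc 1 p, kAux k j :=
    Finset.prod_nonneg fun j _ => (kAux_pos k hpos j).le
  have hqpos : (0 : ℝ) ≤ ∏ j ∈ Icc 1 q, kAux k j :=
    Finset.prod_nonneg fun j _ => (kAux_pos k hpos j).le
  calc (∏ j ∈ Icc 1 (p + q), kAux k j)
      = (∏ j ∈ Icc 1 q, kAux k j) * ∏ j ∈ Icc 1 p, kAux k (q + j) := by rw [hsplit, hmap]
    _ ≤ (∏ j ∈ Icc 1 q, kAux k j) *
        ((∏ j ∈ Icc 1 p, ((q + j : ℕ) : ℝ) / ((j : ℕ) : ℝ)) * ∏ j ∈ Icc 1 p, kAux k j) := by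
        apply mul_le_mul_of_nonneg_left _ hqpos
        rw [← hprod2]; exact hprod1
    _ ≤ (∏ j ∈ Icc 1 q, kAux k j) * ((2 : ℝ) ^ (p + q) * ∏ j ∈ Icc 1 p, kAux k j) := by
        apply mul_le_mul_of_nonneg_left _ hqpos
        exact mul_le_mul_of_nonneg_right hratio hppos
    _ = (2 : ℝ) ^ (p + q) *
        ((∏ j ∈ Icc 1 p, kAux k j) * (∏ j ∈ Icc 1 q, kAux k j)) := by ring
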